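/- Under the setup of the previous statement (𝒜₀ compact invariant for ż = f(z), F Hurwitz, σ(z) = ∫_{-∞}^0 e^{-Fs}GΩ(τ₁(φ(s,z)))ds), the solution X(t) of Ẋ = FX + GΩ(τ₁(φ(t,z₀))) with initial condition X(0)=X₀ satisfies X(t) = e^{Ft}[X₀ - σ(z₀)] + σ(φ(t,z₀)) for all t ∈ ℝ. In particular, X(t) is bounded for t ≤ 0 if and only if X₀ = σ(z₀). -/

import Mathlib

open MeasureTheory Matrix

/-- Hurwitz matrix: all complex eigenvalues have negative real part. -/
def IsHurwitz {m : ℕ} (A : Matrix (Fin m) (Fin m) ℝ) : Prop :=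
  ∀ μ ∈ spectrum ℂ (A.map (algebraMap ℝ ℂ)), μ.re < 0

section Aux

open NormedSpace

variable {n p : ℕ}

lemma hasDerivAt_exp_smul_entry {𝔸 : Type*} [NormedRing 𝔸] [NormedAlgebra ℝ 𝔸] [CompleteSpace 𝔸]
    (M : Matrix (Fin n) (Fin n) 𝔸) (t : ℝ) (i j : Fin n) :
    HasDerivAt (fun t : ℝ => exp (t • M) i j) ((exp (t • M) * M) i j) t := by
  letI : SeminormedRing (Matrix (Fin n) (Fin n) 𝔸) := Matrix.linftyOpSemiNormedRing
  letI : NormedRing (Matrix (Fin n) (Fin n) 𝔸) := Matrix.linftyOpNormedRing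
  letI : NormedAlgebra ℝ (Matrix (Fin n) (Fin n) 𝔸) := Matrix.linftyOpNormedAlgebra
  haveI : @CompleteSpace (Matrix (Fin n) (Fin n) 𝔸) PseudoMetricSpace.toUniformSpace :=
    inferInstanceAs (CompleteSpace (Fin n → Fin n → 𝔸))
  have h := hasDerivAt_exp_smul_const (𝕂 := ℝ) M t
  let L : Matrix (Fin n) (Fin n) 𝔸 →L[ℝ] 𝔸 :=
    (ContinuousLinearMap.proj (R := ℝ) (φ := fun _ : Fin n => 𝔸) j).comp
      (ContinuousLinearMap.proj (R := ℝ) (φ := fun _ : Fin n => Fin n → 𝔸) i)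
  exact L.hasFDerivAt.comp_hasDerivAt t h

lemma hasDerivAt_mulVec {𝔸 : Type*} [NormedCommRing 𝔸] [NormedAlgebra ℝ 𝔸]
    {A : ℝ → Matrix (Fin n) (Fin p) 𝔸} {A' : Matrix (Fin n) (Fin p) 𝔸}
    {c : ℝ → Fin p → 𝔸} {c' : Fin p → 𝔸} {t : ℝ}
    (hA : ∀ i j, HasDerivAt (fun s => A s i j) (A' i j) t)
    (hc : HasDerivAt c c' t) :
    HasDerivAt (fun s => (A s).mulVec (c s)) (A'.mulVec (c t) + (A t).mulVec c') t := by
  rw [hasDerivAt_pi] at hc ⊢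
  intro i
  have : ∀ j : Fin p, HasDerivAt (fun s => A s i j * c s j)
      (A' i j * c t j + A t i j * c' j) t := fun j => (hA i j).mul (hc j)
  have hsum := HasDerivAt.fun_sum (u := (Finset.univ : Finset (Fin p))) (fun j _ => this j)
  simpa [Matrix.mulVec, dotProduct, Finset.sum_add_distrib] using hsum

lemma exp_smul_add {𝔸 : Type*} [NormedRing 𝔸] [NormedAlgebra ℝ 𝔸] [CompleteSpace 𝔸]
    (M : Matrix (Fin n) (Fin n) 𝔸) (s t : ℝ) :
    exp ((s + t) • M) = exp (s • M) * exp (t • M) := by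
  rw [add_smul]
  letI : NormedAlgebra ℚ 𝔸 := .restrictScalars ℚ ℝ 𝔸
  exact Matrix.exp_add_of_commute _ _ ((Commute.refl M).smul_left s |>.smul_right t)

lemma exp_smul_neg_mul {𝔸 : Type*} [NormedRing 𝔸] [NormedAlgebra ℝ 𝔸] [CompleteSpace 𝔸]
    (M : Matrix (Fin n) (Fin n) 𝔸) (t : ℝ) :
    exp ((-t) • M) * exp (t • M) = 1 := by
  rw [← exp_smul_add M (-t) t]
  simp [NormedSpace.exp_zero]

lemma exp_smul_mul_neg {𝔸 : Type*} [NormedRing 𝔸] [NormedAlgebra ℝ 𝔸] [CompleteSpace 𝔸]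
    (M : Matrix (Fin n) (Fin n) 𝔸) (t : ℝ) :
    exp (t • M) * exp ((-t) • M) = 1 := by
  simpa using exp_smul_neg_mul M (-t)

lemma exp_smul_neg_matrix {𝔸 : Type*} [NormedRing 𝔸] [NormedAlgebra ℝ 𝔸] [CompleteSpace 𝔸]
    (M : Matrix (Fin n) (Fin n) 𝔸) (t : ℝ) :
    exp (t • (-M)) = exp ((-t) • M) := by
  rw [smul_neg, ← neg_smul]

lemma exp_mulVec_genEig (M : Matrix (Fin n) (Fin n) ℂ) (μ : ℂ) (k : ℕ) (v : Fin n → ℂ)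
    (hv : ((M - μ • 1) ^ k).mulVec v = 0) (t : ℝ) :
    (exp (t • M)).mulVec v = ∑ j ∈ Finset.range k,
      (Complex.exp ((t : ℂ) * μ) * (t : ℂ) ^ j * ((j.factorial : ℂ))⁻¹) •
        ((M - μ • 1) ^ j).mulVec v := by
  classical
  set N := M - μ • 1 with hN
  set u : ℕ → (Fin n → ℂ) := fun j => (N ^ j).mulVec v with hu
  set c : ℕ → ℝ → ℂ := fun j s => Complex.exp ((s : ℂ) * μ) * (s : ℂ) ^ j * (j.factorial : ℂ)⁻¹
    with hc
  set d : ℕ → ℝ → ℂ := fun j s =>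
    Complex.exp ((s : ℂ) * μ) * ((j : ℂ) * (s : ℂ) ^ (j - 1)) * (j.factorial : ℂ)⁻¹ with hd
  set y : ℝ → (Fin n → ℂ) := fun s => ∑ j ∈ Finset.range k, c j s • u j with hy
  have hcder : ∀ (j : ℕ) (s : ℝ), HasDerivAt (fun r => c j r) (μ * c j s + d j s) s := by
    intro j s
    have h1 : HasDerivAt (fun z : ℂ => Complex.exp (z * μ)) (Complex.exp ((s : ℂ) * μ) * μ)
        ((s : ℂ)) := by
      simpa using ((hasDerivAt_id ((s : ℂ))).mul_const μ).cexp
    have h1' : HasDerivAt (fun r : ℝ => Complex.exp ((r : ℂ) * μ))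
        (Complex.exp ((s : ℂ) * μ) * μ) s := h1.comp_ofReal
    have h2 : HasDerivAt (fun r : ℝ => ((r : ℂ)) ^ j) ((j : ℂ) * (s : ℂ) ^ (j - 1)) s :=
      (hasDerivAt_pow j ((s : ℂ))).comp_ofReal
    have h3 := (h1'.mul h2).mul_const ((j.factorial : ℂ)⁻¹)
    have : HasDerivAt (fun r : ℝ => Complex.exp ((r : ℂ) * μ) * (r : ℂ) ^ j
        * (j.factorial : ℂ)⁻¹)
        ((Complex.exp ((s : ℂ) * μ) * μ * (s : ℂ) ^ j
          + Complex.exp ((s : ℂ) * μ) * ((j : ℂ) * (s : ℂ) ^ (j - 1))) * (j.factorial : ℂ)⁻¹)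
        s := h3
    convert this using 1
    simp only [hc, hd]
    ring
  have hustep : ∀ j, N.mulVec (u j) = u (j + 1) := by
    intro j
    simp only [hu, Matrix.mulVec_mulVec, ← pow_succ']
  have huk : u k = 0 := hv
  have hyder : ∀ s, HasDerivAt y (M.mulVec (y s)) s := by
    intro s
    have h := HasDerivAt.fun_sum (u := Finset.range k)
      (fun j _ => ((hcder j s).smul_const (u j)))
    have key : (∑ j ∈ Finset.range k, (μ * c j s + d j s) • u j) = M.mulVec (y s) := by
      have hMy : M.mulVec (y s) = μ • y s + N.mulVec (y s) := by
        have hM : M = μ • (1 : Matrix (Fin n) (Fin n) ℂ) + N := by rw [hN]; abel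
        rw [hM, Matrix.add_mulVec, Matrix.smul_mulVec, Matrix.one_mulVec]
      have hNy : N.mulVec (y s) = ∑ j ∈ Finset.range k, c j s • u (j + 1) := by
        have hlin : N.mulVec (∑ j ∈ Finset.range k, c j s • u j)
            = ∑ j ∈ Finset.range k, c j s • N.mulVec (u j) := by
          simp only [← Matrix.mulVecLin_apply, map_sum]
          exact Finset.sum_congr rfl fun j _ => N.mulVecLin.map_smul _ _
        rw [hy]
        rw [hlin]
        exact Finset.sum_congr rfl fun j _ => by rw [hustep]
      have hdsum : (∑ j ∈ Finset.range k, d j s • u j)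
          = ∑ j ∈ Finset.range k, c j s • u (j + 1) := by
        cases k with
        | zero => simp
        | succ K =>
          rw [Finset.sum_range_succ' (fun j => d j s • u j) K]
          rw [Finset.sum_range_succ (fun j => c j s • u (j + 1)) K]
          have hd0 : d 0 s = 0 := by simp [hd]
          have hdc : ∀ i : ℕ, d (i + 1) s = c i s := by
            intro i
            have h1 : ((i : ℂ) + 1) ≠ 0 := Nat.cast_add_one_ne_zero i
            have h2 : ((i.factorial : ℂ)) ≠ 0 :=
              Nat.cast_ne_zero.mpr (Nat.factorial_ne_zero i)
            simp only [hd, hc, Nat.add_sub_cancel, Nat.factorial_succ]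
            push_cast
            field_simp
          rw [hd0, huk]
          simp only [zero_smul, smul_zero, add_zero]
          exact Finset.sum_congr rfl fun i _ => by rw [hdc]
      rw [hMy, hNy, ← hdsum, hy]
      simp only [add_smul, mul_smul, Finset.sum_add_distrib, Finset.smul_sum]
    rw [← key]
    exact h
  set g : ℝ → (Fin n → ℂ) := fun s => (exp (s • (-M))).mulVec (y s) with hg
  have hgder : ∀ s, HasDerivAt g 0 s := by
    intro s
    have hA : ∀ i j, HasDerivAt (fun r : ℝ => exp (r • (-M)) i j)
        ((exp (s • (-M)) * (-M)) i j) s := fun i j => hasDerivAt_exp_smul_entry (-M) s i j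
    have h := hasDerivAt_mulVec hA (hyder s)
    have hz : (exp (s • (-M)) * (-M)).mulVec (y s)
        + (exp (s • (-M))).mulVec (M.mulVec (y s)) = 0 := by
      rw [mul_neg, Matrix.neg_mulVec, Matrix.mulVec_mulVec]
      exact neg_add_cancel _
    rwa [hz] at h
  have hgconst : g t = g 0 := by
    have hdiff : Differentiable ℝ g := fun s => (hgder s).differentiableAt
    exact is_const_of_deriv_eq_zero hdiff (fun s => (hgder s).deriv) t 0
  have hy0 : y 0 = v := by
    cases k with
    | zero =>
      have hv0 : v = 0 := by simpa [hu] using hv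
      simp [hy, hv0]
    | succ K =>
      have hy00 : y 0 = ∑ j ∈ Finset.range (K + 1), c j 0 • u j := rfl
      rw [hy00, Finset.sum_eq_single 0]
      · simp [hc, hu]
      · intro j _ hj
        have hz : ((0 : ℝ) : ℂ) ^ j = 0 := by
          rw [Complex.ofReal_zero]; exact zero_pow hj
        simp [hc, hz, hj]
      · intro h; exact absurd (Finset.mem_range.mpr (Nat.succ_pos K)) h
  have hg0 : g 0 = v := by
    have : g 0 = (exp ((0 : ℝ) • (-M))).mulVec (y 0) := rfl
    rw [this, zero_smul, NormedSpace.exp_zero, Matrix.one_mulVec, hy0]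
  have h1 : (exp (t • (-M))).mulVec (y t) = v := by
    have : g t = (exp (t • (-M))).mulVec (y t) := rfl
    rw [← this, hgconst, hg0]
  have hfinal : (exp (t • M)).mulVec v = y t := by
    rw [← h1, Matrix.mulVec_mulVec, exp_smul_neg_matrix, exp_smul_mul_neg,
      Matrix.one_mulVec]
  rw [hfinal]

lemma continuous_exp_smul' {𝔸 : Type*} [NormedRing 𝔸] [NormedAlgebra ℝ 𝔸] [CompleteSpace 𝔸]
    (M : Matrix (Fin n) (Fin n) 𝔸) :
    Continuous (fun t : ℝ => exp (t • M)) := by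
  letI : SeminormedRing (Matrix (Fin n) (Fin n) 𝔸) := Matrix.linftyOpSemiNormedRing
  letI : NormedRing (Matrix (Fin n) (Fin n) 𝔸) := Matrix.linftyOpNormedRing
  letI : NormedAlgebra ℝ (Matrix (Fin n) (Fin n) 𝔸) := Matrix.linftyOpNormedAlgebra
  letI : NormedAlgebra ℚ (Matrix (Fin n) (Fin n) 𝔸) := .restrictScalars ℚ ℝ _
  haveI : @CompleteSpace (Matrix (Fin n) (Fin n) 𝔸) PseudoMetricSpace.toUniformSpace :=
    inferInstanceAs (CompleteSpace (Fin n → Fin n → 𝔸))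
  exact NormedSpace.exp_continuous.comp (continuous_id.smul continuous_const)

lemma exists_mulVec_bound (A : Matrix (Fin n) (Fin p) ℝ) :
    ∃ K : ℝ, 0 ≤ K ∧ ∀ v : Fin p → ℝ, ‖A.mulVec v‖ ≤ K * ‖v‖ := by
  letI : NormedAddCommGroup (Matrix (Fin n) (Fin p) ℝ) := Matrix.linftyOpNormedAddCommGroup
  exact ⟨‖A‖, norm_nonneg A, fun v => Matrix.linfty_opNorm_mulVec A v⟩

lemma integrableOn_exp_mul_Iic' {lam : ℝ} (hlam : 0 < lam) :
    IntegrableOn (fun s : ℝ => Real.exp (lam * s)) (Set.Iic 0) := by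
  have h0 : IntegrableOn Real.exp (Set.Iic (0:ℝ)) := integrableOn_exp_Iic 0
  have h1 : Integrable ((Set.Iic (0:ℝ)).indicator Real.exp) :=
    (integrable_indicator_iff measurableSet_Iic).mpr h0
  have h2 := h1.comp_mul_left' (ne_of_gt hlam)
  have h3 : (fun s : ℝ => (Set.Iic (0:ℝ)).indicator Real.exp (lam * s))
      = (Set.Iic (0:ℝ)).indicator (fun s => Real.exp (lam * s)) := by
    funext s
    by_cases hs : s ≤ 0
    · have h4 : lam * s ≤ 0 := mul_nonpos_of_nonneg_of_nonpos (le_of_lt hlam) hs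
      rw [Set.indicator_of_mem (Set.mem_Iic.mpr h4), Set.indicator_of_mem (Set.mem_Iic.mpr hs)]
    · have h4 : ¬(lam * s ≤ 0) := by
        push_neg at hs ⊢
        exact mul_pos hlam hs
      rw [Set.indicator_of_notMem (fun hmem => h4 (Set.mem_Iic.mp hmem)),
        Set.indicator_of_notMem (fun hmem => hs (Set.mem_Iic.mp hmem))]
  rw [h3] at h2
  exact (integrable_indicator_iff measurableSet_Iic).mp h2

lemma mulVec_map_complex (A : Matrix (Fin n) (Fin p) ℝ) (v : Fin p → ℝ) :
    (A.map (algebraMap ℝ ℂ)).mulVec (fun i => (v i : ℂ)) = fun i => ((A.mulVec v) i : ℂ) := by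
  funext i
  simp only [Matrix.mulVec, dotProduct, Matrix.map_apply, Complex.coe_algebraMap]
  push_cast
  rfl

lemma norm_complexify (v : Fin n → ℝ) : ‖(fun i => ((v i : ℝ) : ℂ))‖ = ‖v‖ := by
  simp [Pi.norm_def]

lemma exp_map_complex (A : Matrix (Fin n) (Fin n) ℝ) :
    exp (A.map (algebraMap ℝ ℂ)) = (exp A).map (algebraMap ℝ ℂ) := by
  letI : SeminormedRing (Matrix (Fin n) (Fin n) ℝ) := Matrix.linftyOpSemiNormedRing
  letI : NormedRing (Matrix (Fin n) (Fin n) ℝ) := Matrix.linftyOpNormedRing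
  letI : NormedAlgebra ℝ (Matrix (Fin n) (Fin n) ℝ) := Matrix.linftyOpNormedAlgebra
  letI : SeminormedRing (Matrix (Fin n) (Fin n) ℂ) := Matrix.linftyOpSemiNormedRing
  letI : NormedRing (Matrix (Fin n) (Fin n) ℂ) := Matrix.linftyOpNormedRing
  letI : NormedAlgebra ℝ (Matrix (Fin n) (Fin n) ℂ) := Matrix.linftyOpNormedAlgebra
  letI : NormedAlgebra ℚ (Matrix (Fin n) (Fin n) ℝ) := .restrictScalars ℚ ℝ _
  letI : NormedAlgebra ℚ (Matrix (Fin n) (Fin n) ℂ) := .restrictScalars ℚ ℝ _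
  haveI : @CompleteSpace (Matrix (Fin n) (Fin n) ℝ) PseudoMetricSpace.toUniformSpace :=
    inferInstanceAs (CompleteSpace (Fin n → Fin n → ℝ))
  have hc : Continuous ((Algebra.ofId ℝ ℂ).mapMatrix
      (m := Fin n) : Matrix (Fin n) (Fin n) ℝ →ₐ[ℝ] Matrix (Fin n) (Fin n) ℂ) := by
    have : Continuous fun M : Matrix (Fin n) (Fin n) ℝ => M.map (algebraMap ℝ ℂ) := by
      apply continuous_id.matrix_map
      rw [Complex.coe_algebraMap]
      exact Complex.continuous_ofReal
    convert this using 1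
    rfl
  have := (map_exp ((Algebra.ofId ℝ ℂ).mapMatrix
    (m := Fin n) : Matrix (Fin n) (Fin n) ℝ →ₐ[ℝ] Matrix (Fin n) (Fin n) ℂ) hc A).symm
  simp only [AlgHom.mapMatrix_apply] at this
  exact this

lemma poly_exp_bound {lam : ℝ} (hlam : 0 < lam) (j : ℕ) (t : ℝ) (ht : 0 ≤ t) :
    Real.exp (-lam * t) * (t ^ j * ((j.factorial : ℝ))⁻¹) ≤ lam⁻¹ ^ j := by
  have hx : 0 ≤ lam * t := by positivity
  have h1 : (lam * t) ^ j / (j.factorial : ℝ) ≤ Real.exp (lam * t) := by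
    calc (lam * t) ^ j / (j.factorial : ℝ)
        ≤ ∑ i ∈ Finset.range (j + 1), (lam * t) ^ i / (i.factorial : ℝ) :=
          Finset.single_le_sum (f := fun i => (lam * t) ^ i / (i.factorial : ℝ))
            (fun i _ => by positivity) (Finset.self_mem_range_succ j)
      _ ≤ Real.exp (lam * t) := Real.sum_le_exp_of_nonneg hx _
  have hlam' : lam ≠ 0 := ne_of_gt hlam
  have h2 : t ^ j * ((j.factorial : ℝ))⁻¹ ≤ Real.exp (lam * t) * lam⁻¹ ^ j := by
    have := mul_le_mul_of_nonneg_right h1 (le_of_lt (pow_pos (inv_pos.mpr hlam) j))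
    calc t ^ j * ((j.factorial : ℝ))⁻¹
        = (lam * t) ^ j / (j.factorial : ℝ) * lam⁻¹ ^ j := by
          rw [mul_pow, ← mul_pow]
          field_simp
          rw [← mul_pow, mul_comm lam t, mul_assoc, mul_one_div_cancel hlam', mul_one]
      _ ≤ Real.exp (lam * t) * lam⁻¹ ^ j := this
  calc Real.exp (-lam * t) * (t ^ j * ((j.factorial : ℝ))⁻¹)
      ≤ Real.exp (-lam * t) * (Real.exp (lam * t) * lam⁻¹ ^ j) := by
        apply mul_le_mul_of_nonneg_left h2 (Real.exp_nonneg _)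
    _ = lam⁻¹ ^ j := by
        rw [← mul_assoc, ← Real.exp_add]
        simp

lemma decay_of_genEig (M : Matrix (Fin n) (Fin n) ℂ) (μ : ℂ) (k : ℕ) (v : Fin n → ℂ)
    (hv : ((M - μ • 1) ^ k).mulVec v = 0) {lam : ℝ} (hlam : 0 < lam)
    (hμ : μ.re ≤ -2 * lam) :
    ∃ D : ℝ, ∀ t : ℝ, 0 ≤ t → ‖(exp (t • M)).mulVec v‖ ≤ D * Real.exp (-lam * t) := by
  refine ⟨∑ j ∈ Finset.range k, lam⁻¹ ^ j * ‖((M - μ • 1) ^ j).mulVec v‖, fun t ht => ?_⟩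
  rw [exp_mulVec_genEig M μ k v hv t]
  calc ‖∑ j ∈ Finset.range k, (Complex.exp ((t : ℂ) * μ) * (t : ℂ) ^ j
        * ((j.factorial : ℂ))⁻¹) • ((M - μ • 1) ^ j).mulVec v‖
      ≤ ∑ j ∈ Finset.range k, ‖(Complex.exp ((t : ℂ) * μ) * (t : ℂ) ^ j
        * ((j.factorial : ℂ))⁻¹) • ((M - μ • 1) ^ j).mulVec v‖ := norm_sum_le _ _
    _ ≤ ∑ j ∈ Finset.range k, (lam⁻¹ ^ j * ‖((M - μ • 1) ^ j).mulVec v‖)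
        * Real.exp (-lam * t) := by
        apply Finset.sum_le_sum
        intro j _
        rw [norm_smul]
        have hsc : ‖Complex.exp ((t : ℂ) * μ) * (t : ℂ) ^ j * ((j.factorial : ℂ))⁻¹‖
            = Real.exp (t * μ.re) * (t ^ j * ((j.factorial : ℝ))⁻¹) := by
          rw [norm_mul, norm_mul, norm_pow, norm_inv]
          have h1 : ‖Complex.exp ((t : ℂ) * μ)‖ = Real.exp (t * μ.re) := by
            rw [Complex.norm_exp]
            congr 1
            simp [Complex.ofReal_mul]
          have h2 : ‖(t : ℂ)‖ = |t| := Complex.norm_real t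
          have h3 : ‖((j.factorial : ℕ) : ℂ)‖ = (j.factorial : ℝ) := by
            rw [Complex.norm_natCast]
          rw [h1, h2, h3, abs_of_nonneg ht]
          ring
        rw [hsc]
        have hexp : Real.exp (t * μ.re) ≤ Real.exp (-lam * t) * Real.exp (-lam * t) := by
          rw [← Real.exp_add, Real.exp_le_exp]
          have : t * μ.re ≤ t * (-2 * lam) := mul_le_mul_of_nonneg_left hμ ht
          nlinarith
        calc Real.exp (t * μ.re) * (t ^ j * ((j.factorial : ℝ))⁻¹)
            * ‖((M - μ • 1) ^ j).mulVec v‖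
            ≤ (Real.exp (-lam * t) * Real.exp (-lam * t)) * (t ^ j * ((j.factorial : ℝ))⁻¹)
              * ‖((M - μ • 1) ^ j).mulVec v‖ := by
              apply mul_le_mul_of_nonneg_right _ (norm_nonneg _)
              apply mul_le_mul_of_nonneg_right hexp (by positivity)
          _ = (Real.exp (-lam * t) * (t ^ j * ((j.factorial : ℝ))⁻¹)) * Real.exp (-lam * t)
              * ‖((M - μ • 1) ^ j).mulVec v‖ := by ring
          _ ≤ lam⁻¹ ^ j * Real.exp (-lam * t) * ‖((M - μ • 1) ^ j).mulVec v‖ := by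
              apply mul_le_mul_of_nonneg_right _ (norm_nonneg _)
              apply mul_le_mul_of_nonneg_right (poly_exp_bound hlam j t ht) (Real.exp_nonneg _)
          _ = lam⁻¹ ^ j * ‖((M - μ • 1) ^ j).mulVec v‖ * Real.exp (-lam * t) := by ring
    _ = (∑ j ∈ Finset.range k, lam⁻¹ ^ j * ‖((M - μ • 1) ^ j).mulVec v‖)
        * Real.exp (-lam * t) := by rw [Finset.sum_mul]

lemma genEig_decomp (M : Matrix (Fin n) (Fin n) ℂ) (v : Fin n → ℂ) :
    ∃ c : ℂ →₀ (Fin n → ℂ),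
      (∀ μ, ∃ k, ((M - μ • 1) ^ k).mulVec (c μ) = 0) ∧
      (∀ μ ∈ c.support, μ ∈ spectrum ℂ M) ∧
      (c.sum fun _ x => x) = v := by
  classical
  set L : Module.End ℂ (Fin n → ℂ) := Matrix.toLinAlgEquiv' M with hL
  have hT : ⨆ μ, L.maxGenEigenspace μ = ⊤ := Module.End.iSup_maxGenEigenspace_eq_top L
  have hv : v ∈ ⨆ μ, L.maxGenEigenspace μ := hT ▸ Submodule.mem_top
  rw [Submodule.mem_iSup_iff_exists_finsupp] at hv
  obtain ⟨c, hc, hsum⟩ := hv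
  refine ⟨c, ?_, ?_, hsum⟩
  · intro μ
    have := hc μ
    rw [Module.End.mem_maxGenEigenspace] at this
    obtain ⟨k, hk⟩ := this
    refine ⟨k, ?_⟩
    have hsm : (Matrix.toLinAlgEquiv' (μ • (1 : Matrix (Fin n) (Fin n) ℂ))
        : Module.End ℂ (Fin n → ℂ)) = μ • 1 := by
      rw [← Algebra.algebraMap_eq_smul_one, AlgEquiv.commutes,
        Algebra.algebraMap_eq_smul_one]
    have heq : ((L - μ • 1) ^ k : Module.End ℂ (Fin n → ℂ))
        = Matrix.toLinAlgEquiv' ((M - μ • 1) ^ k) := by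
      rw [map_pow, map_sub, hsm, hL]
    rw [heq, Matrix.toLinAlgEquiv'_apply] at hk
    exact hk
  · intro μ hμ
    have hne : L.maxGenEigenspace μ ≠ ⊥ := by
      intro hbot
      have := hc μ
      rw [hbot, Submodule.mem_bot] at this
      exact Finsupp.mem_support_iff.mp hμ this
    have heig : Module.End.HasEigenvalue L μ :=
      Module.End.HasUnifEigenvalue.lt zero_lt_one hne
    have hspec : μ ∈ spectrum ℂ L := Module.End.hasEigenvalue_iff_mem_spectrum.mp heig
    rwa [AlgEquiv.spectrum_eq Matrix.toLinAlgEquiv' M] at hspec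

lemma hurwitz_decay (F : Matrix (Fin n) (Fin n) ℝ) (hF : IsHurwitz F) :
    ∃ C : ℝ, 0 < C ∧ ∃ lam : ℝ, 0 < lam ∧ ∀ t : ℝ, 0 ≤ t → ∀ v : Fin n → ℝ,
      ‖(exp (t • F)).mulVec v‖ ≤ C * Real.exp (-lam * t) * ‖v‖ := by
  classical
  set Fc := F.map (algebraMap ℝ ℂ) with hFc
  -- decompose each basis vector
  have hdec := fun i : Fin n => genEig_decomp Fc (fun j => if i = j then (1 : ℂ) else 0)
  choose c hck hcs hcsum using hdec
  set T : Finset ℂ := Finset.univ.biUnion (fun i => (c i).support) with hT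
  have hTspec : ∀ μ ∈ T, μ.re < 0 := by
    intro μ hμ
    rw [hT, Finset.mem_biUnion] at hμ
    obtain ⟨i, _, hi⟩ := hμ
    exact hF μ (hcs i μ hi)
  -- choose the decay rate
  set lam : ℝ := if hne : T.Nonempty then (T.inf' hne fun μ => -μ.re) / 2 else 1 with hlam'
  have hlampos : 0 < lam := by
    rw [hlam']
    split_ifs with hne
    · have : 0 < T.inf' hne fun μ => -μ.re := by
        rw [Finset.lt_inf'_iff]
        intro μ hμ
        linarith [hTspec μ hμ]
      linarith
    · norm_num
  have hlamle : ∀ μ ∈ T, μ.re ≤ -2 * lam := by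
    intro μ hμ
    have hne : T.Nonempty := ⟨μ, hμ⟩
    rw [hlam', dif_pos hne]
    have := Finset.inf'_le (fun μ => -μ.re) hμ
    linarith
  -- decay for each piece
  have hpiece : ∀ (i : Fin n) (μ : ℂ), μ ∈ (c i).support →
      ∃ D : ℝ, ∀ t : ℝ, 0 ≤ t →
        ‖(exp (t • Fc)).mulVec (c i μ)‖ ≤ D * Real.exp (-lam * t) := by
    intro i μ hμ
    obtain ⟨k, hk⟩ := hck i μ
    exact decay_of_genEig Fc μ k (c i μ) hk hlampos
      (hlamle μ (Finset.mem_biUnion.mpr ⟨i, Finset.mem_univ i, hμ⟩))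
  choose D hD using hpiece
  -- decay for each complexified basis vector
  have hbasis : ∀ i : Fin n, ∃ Di : ℝ, ∀ t : ℝ, 0 ≤ t →
      ‖(exp (t • Fc)).mulVec (fun j => if i = j then (1 : ℂ) else 0)‖
        ≤ Di * Real.exp (-lam * t) := by
    intro i
    refine ⟨∑ μ ∈ (c i).support.attach, D i μ.1 μ.2, fun t ht => ?_⟩
    have hsplit : (exp (t • Fc)).mulVec (fun j => if i = j then (1 : ℂ) else 0)
        = ∑ μ ∈ (c i).support.attach, (exp (t • Fc)).mulVec (c i μ.1) := by
      rw [← hcsum i]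
      rw [Finsupp.sum]
      rw [← Finset.sum_attach ((c i).support) (fun μ => c i μ)]
      simp only [← Matrix.mulVecLin_apply, map_sum]
    rw [hsplit]
    calc ‖∑ μ ∈ (c i).support.attach, (exp (t • Fc)).mulVec (c i μ.1)‖
        ≤ ∑ μ ∈ (c i).support.attach, ‖(exp (t • Fc)).mulVec (c i μ.1)‖ :=
          norm_sum_le _ _
      _ ≤ ∑ μ ∈ (c i).support.attach, D i μ.1 μ.2 * Real.exp (-lam * t) :=
          Finset.sum_le_sum fun μ _ => hD i μ.1 μ.2 t ht
      _ = (∑ μ ∈ (c i).support.attach, D i μ.1 μ.2) * Real.exp (-lam * t) := by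
          rw [Finset.sum_mul]
  choose Di hDi using hbasis
  refine ⟨max (∑ i, Di i) 0 + 1, by positivity, lam, hlampos, fun t ht v => ?_⟩
  -- complexify
  have hkey : ‖(exp (t • F)).mulVec v‖ = ‖(exp (t • Fc)).mulVec (fun i => (v i : ℂ))‖ := by
    have h1 : exp (t • Fc) = (exp (t • F)).map (algebraMap ℝ ℂ) := by
      have : t • Fc = (t • F).map (algebraMap ℝ ℂ) := by
        rw [hFc]
        funext a b
        simp [Matrix.map_apply]
      rw [this, exp_map_complex]
    rw [h1, mulVec_map_complex, norm_complexify]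
  rw [hkey]
  have hvdec : (fun i => (v i : ℂ)) = ∑ i : Fin n, (v i : ℂ) •
      (fun j => if i = j then (1 : ℂ) else 0) := by
    have := pi_eq_sum_univ (fun i => (v i : ℂ))
    convert this using 1
  rw [hvdec]
  have hlin : (exp (t • Fc)).mulVec (∑ i : Fin n, (v i : ℂ) •
      (fun j => if i = j then (1 : ℂ) else 0))
      = ∑ i : Fin n, (v i : ℂ) • (exp (t • Fc)).mulVec
        (fun j => if i = j then (1 : ℂ) else 0) := by
    simp only [← Matrix.mulVecLin_apply, map_sum]
    exact Finset.sum_congr rfl fun i _ => (Matrix.mulVecLin _).map_smul _ _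
  rw [hlin]
  calc ‖∑ i : Fin n, (v i : ℂ) • (exp (t • Fc)).mulVec
        (fun j => if i = j then (1 : ℂ) else 0)‖
      ≤ ∑ i : Fin n, ‖(v i : ℂ) • (exp (t • Fc)).mulVec
        (fun j => if i = j then (1 : ℂ) else 0)‖ := norm_sum_le _ _
    _ ≤ ∑ i : Fin n, ‖v‖ * (Di i * Real.exp (-lam * t)) := by
        apply Finset.sum_le_sum
        intro i _
        rw [norm_smul]
        have h1 : ‖((v i : ℝ) : ℂ)‖ ≤ ‖v‖ := by
          rw [Complex.norm_real]
          exact norm_le_pi_norm v i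
        have h2 := hDi i t ht
        have h2' : (0 : ℝ) ≤ Di i * Real.exp (-lam * t) := le_trans (norm_nonneg _) h2
        exact mul_le_mul h1 h2 (norm_nonneg _) (norm_nonneg _)
    _ = ‖v‖ * ((∑ i : Fin n, Di i) * Real.exp (-lam * t)) := by
        rw [← Finset.mul_sum, ← Finset.sum_mul]
    _ ≤ (max (∑ i, Di i) 0 + 1) * Real.exp (-lam * t) * ‖v‖ := by
        have h3 : (∑ i : Fin n, Di i) ≤ max (∑ i : Fin n, Di i) 0 + 1 := by
          have := le_max_left (∑ i : Fin n, Di i) (0 : ℝ); linarith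
        have h4 : ‖v‖ * ((∑ i : Fin n, Di i) * Real.exp (-lam * t))
            ≤ ‖v‖ * ((max (∑ i : Fin n, Di i) 0 + 1) * Real.exp (-lam * t)) := by
          apply mul_le_mul_of_nonneg_left _ (norm_nonneg _)
          exact mul_le_mul_of_nonneg_right h3 (Real.exp_nonneg _)
        calc ‖v‖ * ((∑ i : Fin n, Di i) * Real.exp (-lam * t))
            ≤ ‖v‖ * ((max (∑ i : Fin n, Di i) 0 + 1) * Real.exp (-lam * t)) := h4
          _ = (max (∑ i : Fin n, Di i) 0 + 1) * Real.exp (-lam * t) * ‖v‖ := by ring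

end Aux

open NormedSpace in
/-- every solution of `Ẋ = F X + G Ω(τ₁(φ(t,z₀)))` satisfies
`X(t) = e^{Ft}[X₀ - σ(z₀)] + σ(φ(t,z₀))`; it is bounded for `t ≤ 0` iff
`X₀ = σ(z₀)`. -/
theorem solution_formula_and_backward_boundedness (N m q : ℕ)
    (f : (Fin N → ℝ) → (Fin N → ℝ)) (hf : LocallyLipschitz f)
    (φ : ℝ → (Fin N → ℝ) → (Fin N → ℝ))
    (hφ0 : ∀ z, φ 0 z = z)
    (hφadd : ∀ s t z, φ (s + t) z = φ s (φ t z))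
    (hφode : ∀ z t, HasDerivAt (fun τ => φ τ z) (f (φ t z)) t)
    (A₀ : Set (Fin N → ℝ)) (hA₀c : IsCompact A₀)
    (hA₀inv : ∀ t, ∀ z ∈ A₀, φ t z ∈ A₀)
    (F : Matrix (Fin m) (Fin m) ℝ) (hF : IsHurwitz F)
    (G : Matrix (Fin m) (Fin q) ℝ)
    (w : (Fin N → ℝ) → (Fin q → ℝ)) (hw : ContinuousOn w A₀)
    (σ : (Fin N → ℝ) → (Fin m → ℝ))
    (hσ : ∀ z ∈ A₀, σ z =
      ∫ s in Set.Iic (0 : ℝ), (NormedSpace.exp ((-s) • F)).mulVec (G.mulVec (w (φ s z))))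
    (z₀ : Fin N → ℝ) (hz₀ : z₀ ∈ A₀)
    (X₀ : Fin m → ℝ) (X : ℝ → (Fin m → ℝ)) (hX0 : X 0 = X₀)
    (hXode : ∀ t, HasDerivAt X (F.mulVec (X t) + G.mulVec (w (φ t z₀))) t) :
    (∀ t : ℝ, X t = (NormedSpace.exp (t • F)).mulVec (X₀ - σ z₀) + σ (φ t z₀)) ∧
    ((∃ Cb : ℝ, ∀ t ≤ (0:ℝ), ‖X t‖ ≤ Cb) ↔ X₀ = σ z₀) := by
  classical
  obtain ⟨C, hC, lam, hlam, hdecay⟩ := hurwitz_decay F hF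
  obtain ⟨Cw, hCw⟩ : ∃ Cw : ℝ, ∀ z ∈ A₀, ‖w z‖ ≤ Cw :=
    hA₀c.exists_bound_of_continuousOn hw
  have hCw0 : (0:ℝ) ≤ Cw := le_trans (norm_nonneg _) (hCw z₀ hz₀)
  obtain ⟨KG, hKG0, hKG⟩ := exists_mulVec_bound G
  -- continuity facts
  have hφc : ∀ z, Continuous fun s => φ s z := fun z =>
    continuous_iff_continuousAt.mpr fun s => (hφode z s).continuousAt
  have hwz : ∀ z ∈ A₀, Continuous fun s => w (φ s z) := fun z hz =>
    hw.comp_continuous (hφc z) (fun s => hA₀inv s z hz)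
  have huzc : ∀ z ∈ A₀, Continuous
      (fun s => (exp ((-s) • F)).mulVec (G.mulVec (w (φ s z)))) := by
    intro z hz
    have h1 : Continuous fun s : ℝ => exp ((-s) • F) := by
      have := (continuous_exp_smul' F).comp continuous_neg
      exact this
    exact h1.matrix_mulVec (continuous_const.matrix_mulVec (hwz z hz))
  -- pointwise bound on the σ-integrand
  have hubound : ∀ z ∈ A₀, ∀ s : ℝ, s ≤ 0 →
      ‖(exp ((-s) • F)).mulVec (G.mulVec (w (φ s z)))‖
        ≤ C * KG * Cw * Real.exp (lam * s) := by
    intro z hz s hs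
    have h1 := hdecay (-s) (by linarith) (G.mulVec (w (φ s z)))
    have h2 : ‖G.mulVec (w (φ s z))‖ ≤ KG * Cw := by
      calc ‖G.mulVec (w (φ s z))‖ ≤ KG * ‖w (φ s z)‖ := hKG _
        _ ≤ KG * Cw := mul_le_mul_of_nonneg_left (hCw _ (hA₀inv s z hz)) hKG0
    calc ‖(exp ((-s) • F)).mulVec (G.mulVec (w (φ s z)))‖
        ≤ C * Real.exp (-lam * -s) * ‖G.mulVec (w (φ s z))‖ := h1
      _ ≤ C * Real.exp (-lam * -s) * (KG * Cw) := by
          apply mul_le_mul_of_nonneg_left h2 (by positivity)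
      _ = C * KG * Cw * Real.exp (lam * s) := by rw [neg_mul_neg]; ring
  -- integrability of the σ-integrand on half-lines
  have hdom : IntegrableOn (fun s : ℝ => C * KG * Cw * Real.exp (lam * s)) (Set.Iic 0) :=
    (integrableOn_exp_mul_Iic' hlam).const_mul _
  have huint0 : ∀ z ∈ A₀, IntegrableOn
      (fun s => (exp ((-s) • F)).mulVec (G.mulVec (w (φ s z)))) (Set.Iic 0) := by
    intro z hz
    apply Integrable.mono' hdom ((huzc z hz).aestronglyMeasurable)
    filter_upwards [ae_restrict_mem measurableSet_Iic] with s hs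
    exact hubound z hz s hs
  have huint : ∀ z ∈ A₀, ∀ a : ℝ, IntegrableOn
      (fun s => (exp ((-s) • F)).mulVec (G.mulVec (w (φ s z)))) (Set.Iic a) := by
    intro z hz a
    rcases le_or_gt a 0 with h | h
    · exact (huint0 z hz).mono_set (Set.Iic_subset_Iic.mpr h)
    · have hsub : Set.Iic a ⊆ Set.Iic 0 ∪ Set.Icc 0 a := by
        intro x hx
        rcases le_or_gt x 0 with h0 | h0
        · exact Or.inl h0
        · exact Or.inr ⟨le_of_lt h0, hx⟩
      exact (((huint0 z hz).union ((huzc z hz).integrableOn_Icc)).mono_set hsub)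
  -- bound on σ
  set Cσ : ℝ := ∫ s in Set.Iic (0:ℝ), C * KG * Cw * Real.exp (lam * s) with hCσ
  have hσb : ∀ z ∈ A₀, ‖σ z‖ ≤ Cσ := by
    intro z hz
    rw [hσ z hz]
    apply norm_integral_le_of_norm_le hdom
    filter_upwards [ae_restrict_mem measurableSet_Iic] with s hs
    exact hubound z hz s hs
  -- variation of constants
  have hXder : ∀ t : ℝ, HasDerivAt (fun s => (exp ((-s) • F)).mulVec (X s))
      ((exp ((-t) • F)).mulVec (G.mulVec (w (φ t z₀)))) t := by
    intro t
    have hA : ∀ i j, HasDerivAt (fun s : ℝ => exp (s • (-F)) i j)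
        ((exp (t • (-F)) * (-F)) i j) t := fun i j => hasDerivAt_exp_smul_entry (-F) t i j
    have h := hasDerivAt_mulVec hA (hXode t)
    have hval : (exp (t • (-F)) * (-F)).mulVec (X t)
        + (exp (t • (-F))).mulVec (F.mulVec (X t) + G.mulVec (w (φ t z₀)))
        = (exp ((-t) • F)).mulVec (G.mulVec (w (φ t z₀))) := by
      rw [Matrix.mulVec_add, mul_neg, Matrix.neg_mulVec, Matrix.mulVec_mulVec,
        exp_smul_neg_matrix]
      abel
    rw [hval] at h
    have hfun : (fun s => (exp (s • (-F))).mulVec (X s))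
        = (fun s => (exp ((-s) • F)).mulVec (X s)) := by
      funext s; rw [exp_smul_neg_matrix]
    rwa [hfun] at h
  have hVOC : ∀ t : ℝ, (exp ((-t) • F)).mulVec (X t) - X₀
      = ∫ s in (0:ℝ)..t, (exp ((-s) • F)).mulVec (G.mulVec (w (φ s z₀))) := by
    intro t
    have h := intervalIntegral.integral_eq_sub_of_hasDerivAt
      (f := fun s => (exp ((-s) • F)).mulVec (X s))
      (f' := fun s => (exp ((-s) • F)).mulVec (G.mulVec (w (φ s z₀))))
      (fun s _ => hXder s) ((huzc z₀ hz₀).intervalIntegrable 0 t)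
    rw [h]
    congr 1
    show X₀ = (exp ((-(0:ℝ)) • F)).mulVec (X 0)
    rw [neg_zero, zero_smul, NormedSpace.exp_zero, Matrix.one_mulVec, hX0]
  have hXformula : ∀ t : ℝ, X t = (exp (t • F)).mulVec
      (X₀ + ∫ s in (0:ℝ)..t, (exp ((-s) • F)).mulVec (G.mulVec (w (φ s z₀)))) := by
    intro t
    have h1 : (exp ((-t) • F)).mulVec (X t)
        = X₀ + ∫ s in (0:ℝ)..t, (exp ((-s) • F)).mulVec (G.mulVec (w (φ s z₀))) := by
      have h := sub_eq_iff_eq_add.mp (hVOC t)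
      rw [h]; exact add_comm _ _
    calc X t = (exp (t • F)).mulVec ((exp ((-t) • F)).mulVec (X t)) := by
          rw [Matrix.mulVec_mulVec, exp_smul_mul_neg, Matrix.one_mulVec]
      _ = _ := by rw [h1]
  have hσshift : ∀ t : ℝ, σ (φ t z₀) = (exp (t • F)).mulVec
      (σ z₀ + ∫ s in (0:ℝ)..t, (exp ((-s) • F)).mulVec (G.mulVec (w (φ s z₀)))) := by
    intro t
    have hzt : φ t z₀ ∈ A₀ := hA₀inv t z₀ hz₀
    have hint1 : σ (φ t z₀)
        = ∫ s in Set.Iic (0:ℝ),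
            (fun r => (exp ((t - r) • F)).mulVec (G.mulVec (w (φ r z₀)))) (s + t) := by
      rw [hσ _ hzt]
      apply setIntegral_congr_fun measurableSet_Iic
      intro s _
      have hφs : φ s (φ t z₀) = φ (s + t) z₀ := (hφadd s t z₀).symm
      have harg : t - (s + t) = -s := by ring
      simp only [hφs, harg]
    have hint2 : (∫ s in Set.Iic (0:ℝ),
          (fun r => (exp ((t - r) • F)).mulVec (G.mulVec (w (φ r z₀)))) (s + t))
        = ∫ r in Set.Iic t, (exp ((t - r) • F)).mulVec (G.mulVec (w (φ r z₀))) := by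
      have hmp : MeasurePreserving (fun s : ℝ => s + t) volume volume :=
        measurePreserving_add_right volume t
      have hemb : MeasurableEmbedding (fun s : ℝ => s + t) :=
        (MeasurableEquiv.addRight t).measurableEmbedding
      have hpre : (fun s : ℝ => s + t) ⁻¹' (Set.Iic t) = Set.Iic (0:ℝ) := by
        ext s
        simp only [Set.mem_preimage, Set.mem_Iic]
        constructor <;> intro h <;> linarith
      rw [← hpre]
      exact hmp.setIntegral_preimage_emb hemb
        (fun r => (exp ((t - r) • F)).mulVec (G.mulVec (w (φ r z₀)))) (Set.Iic t)
    have hpt : (fun r => (exp ((t - r) • F)).mulVec (G.mulVec (w (φ r z₀))))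
        = fun r => (exp (t • F)).mulVec
            ((exp ((-r) • F)).mulVec (G.mulVec (w (φ r z₀)))) := by
      funext r
      conv_rhs => rw [Matrix.mulVec_mulVec, ← exp_smul_add]
      rw [sub_eq_add_neg]
    have hint3 : (∫ r in Set.Iic t, (exp ((t - r) • F)).mulVec (G.mulVec (w (φ r z₀))))
        = (exp (t • F)).mulVec (∫ r in Set.Iic t,
            (exp ((-r) • F)).mulVec (G.mulVec (w (φ r z₀)))) := by
      rw [hpt]
      have := ContinuousLinearMap.integral_comp_comm
        (LinearMap.toContinuousLinearMap (Matrix.mulVecLin (exp (t • F))))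
        (huint z₀ hz₀ t)
      simpa [Matrix.mulVecLin_apply] using this
    have hsplit : (∫ r in Set.Iic t, (exp ((-r) • F)).mulVec (G.mulVec (w (φ r z₀))))
        = σ z₀ + ∫ s in (0:ℝ)..t, (exp ((-s) • F)).mulVec (G.mulVec (w (φ s z₀))) := by
      have h := intervalIntegral.integral_Iic_sub_Iic (huint z₀ hz₀ 0) (huint z₀ hz₀ t)
      rw [hσ z₀ hz₀]
      rw [sub_eq_iff_eq_add.mp h]
      exact add_comm _ _
    rw [hint1, hint2, hint3, hsplit]
  have hformula : ∀ t : ℝ, X t = (exp (t • F)).mulVec (X₀ - σ z₀) + σ (φ t z₀) := by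
    intro t
    have hvec : X₀ + (∫ s in (0:ℝ)..t, (exp ((-s) • F)).mulVec (G.mulVec (w (φ s z₀))))
        = (X₀ - σ z₀) + (σ z₀ + ∫ s in (0:ℝ)..t,
            (exp ((-s) • F)).mulVec (G.mulVec (w (φ s z₀)))) := by abel
    rw [hXformula t, hσshift t, ← Matrix.mulVec_add, ← hvec]
  refine ⟨hformula, ?_, ?_⟩
  · -- bounded on t ≤ 0 → X₀ = σ z₀
    rintro ⟨Cb, hCb⟩
    have hb : ∀ t : ℝ, t ≤ 0 → ‖(exp (t • F)).mulVec (X₀ - σ z₀)‖ ≤ Cb + Cσ := by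
      intro t ht
      have h1 : (exp (t • F)).mulVec (X₀ - σ z₀) = X t - σ (φ t z₀) := by
        rw [hformula t]; abel
      rw [h1]
      calc ‖X t - σ (φ t z₀)‖ ≤ ‖X t‖ + ‖σ (φ t z₀)‖ := norm_sub_le _ _
        _ ≤ Cb + Cσ := add_le_add (hCb t ht) (hσb _ (hA₀inv t z₀ hz₀))
    have hd : ∀ t : ℝ, t ≤ 0 → ‖X₀ - σ z₀‖ ≤ C * Real.exp (lam * t) * (Cb + Cσ) := by
      intro t ht
      have h2 : X₀ - σ z₀
          = (exp ((-t) • F)).mulVec ((exp (t • F)).mulVec (X₀ - σ z₀)) := by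
        rw [Matrix.mulVec_mulVec, exp_smul_neg_mul, Matrix.one_mulVec]
      calc ‖X₀ - σ z₀‖
          = ‖(exp ((-t) • F)).mulVec ((exp (t • F)).mulVec (X₀ - σ z₀))‖ := by
            rw [← h2]
        _ ≤ C * Real.exp (-lam * -t) * ‖(exp (t • F)).mulVec (X₀ - σ z₀)‖ :=
            hdecay (-t) (by linarith) _
        _ ≤ C * Real.exp (lam * t) * (Cb + Cσ) := by
            rw [neg_mul_neg]
            exact mul_le_mul_of_nonneg_left (hb t ht) (by positivity)
    have hzero : ‖X₀ - σ z₀‖ ≤ 0 := by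
      have htend : Filter.Tendsto (fun t : ℝ => C * Real.exp (lam * t) * (Cb + Cσ))
          Filter.atBot (nhds 0) := by
        have h1 : Filter.Tendsto (fun t : ℝ => lam * t) Filter.atBot Filter.atBot :=
          Filter.tendsto_id.const_mul_atBot hlam
        have h2 : Filter.Tendsto (fun t : ℝ => Real.exp (lam * t)) Filter.atBot (nhds 0) :=
          Real.tendsto_exp_atBot.comp h1
        have h3 := (h2.const_mul C).mul_const (Cb + Cσ)
        simpa using h3
      exact ge_of_tendsto htend (Filter.eventually_atBot.mpr ⟨0, fun t ht => hd t ht⟩)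
    have : X₀ - σ z₀ = 0 := norm_le_zero_iff.mp hzero
    exact sub_eq_zero.mp this
  · -- X₀ = σ z₀ → bounded
    intro hX0σ
    refine ⟨Cσ, fun t _ => ?_⟩
    rw [hformula t, hX0σ, sub_self, Matrix.mulVec_zero, zero_add]
    exact hσb _ (hA₀inv t z₀ hz₀)
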